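/- Let {a_n}_{n=0}^∞ be a Stieltjes moment sequence with representing measure μ such that 0 < θ3 := sup supp μ < ∞, and suppose μ((θ1,θ2)) = 0 for some real θ1, θ2 with 0 < θ1 < θ2 < θ3. Assume the set J := {κ ∈ ℕ : κ ≥ 2 and {a_n^{1/κ}}_{n=0}^∞ is a Stieltjes moment sequence} is nonempty, and for each κ ∈ J let ν_κ be a representing measure of {a_n^{1/κ}}_{n=0}^∞ and β(κ) = θ2^{1/κ}. If ι_s* = 1, where ι_s* = 1 + ⌊log(θ3/θ2)/log(θ2/θ1)⌋, then the following are equivalent: (i) θ2 ∈ supp μ; (ii) β(κ) ∈ supp ν_κ for some κ ∈ J; (iii) β(κ) ∈ supp ν_κ for every κ ∈ J. -/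

import Mathlib

open MeasureTheory
open scoped ENNReal

/-- The closed support of a Borel measure: the set of points all of whose open
neighbourhoods have positive measure. -/
def msupport {X : Type*} [TopologicalSpace X] [MeasurableSpace X] (μ : Measure X) : Set X :=
  {x | ∀ U : Set X, IsOpen U → x ∈ U → 0 < μ U}

/-- `μ` is a representing measure (on `[0,∞)`, modelled as a measure on `ℝ` vanishing on
`(-∞,0)`) of the Stieltjes moment sequence `a`. -/
def IsRepMeas (a : ℕ → ℝ) (μ : Measure ℝ) : Prop :=
  (∀ n, 0 ≤ a n) ∧ μ (Set.Iio 0) = 0 ∧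
    ∀ n : ℕ, ∫⁻ x, ENNReal.ofReal (x ^ n) ∂μ = ENNReal.ofReal (a n)

/-- `a` is a Stieltjes moment sequence. -/
def IsStieltjes (a : ℕ → ℝ) : Prop :=
  ∃ μ : Measure ℝ, IsRepMeas a μ

/-- A Stieltjes moment sequence is determinate if it has a unique representing measure. -/
def IsDeterminate (a : ℕ → ℝ) : Prop :=
  ∀ μ ν : Measure ℝ, IsRepMeas a μ → IsRepMeas a ν → μ = ν

def prodSet (S : Set ℝ) : ℕ → Set ℝ
  | 0 => S
  | k+1 => (fun p : ℝ × ℝ => p.1 * p.2) '' ((prodSet S k) ×ˢ S)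

lemma msupport_closed {X : Type*} [TopologicalSpace X] [MeasurableSpace X] (μ : Measure X) :
    IsClosed (msupport μ) := by
  rw [← isOpen_compl_iff, isOpen_iff_mem_nhds]
  intro x hx
  simp only [Set.mem_compl_iff, msupport, Set.mem_setOf_eq, not_forall] at hx
  obtain ⟨U, hU, hxU, hμU⟩ := hx
  refine Filter.mem_of_superset (hU.mem_nhds hxU) ?_
  intro y hy hmem
  exact hμU (hmem U hU hy)

lemma measure_compl_msupport {X : Type*} [TopologicalSpace X] [MeasurableSpace X]
    [SecondCountableTopology X] (μ : Measure X) :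
    μ (msupport μ)ᶜ = 0 := by
  obtain ⟨T, hTc, hTsub, hTU⟩ := TopologicalSpace.isOpen_sUnion_countable
    {U : Set X | IsOpen U ∧ μ U = 0} (fun s hs => hs.1)
  have hsub : (msupport μ)ᶜ ⊆ ⋃₀ T := by
    rw [hTU]
    intro x hx
    simp only [Set.mem_compl_iff, msupport, Set.mem_setOf_eq, not_forall] at hx
    obtain ⟨U, hU, hxU, hμU⟩ := hx
    exact ⟨U, ⟨hU, by simpa using hμU⟩, hxU⟩
  refine measure_mono_null hsub ?_
  rw [measure_sUnion_null_iff hTc]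
  exact fun s hs => (hTsub hs).2

section moments
variable (m : Measure ℝ) (M : ℝ)

lemma ae_mem_Icc (hconc : m (Set.Icc 0 M)ᶜ = 0) : ∀ᵐ x ∂m, x ∈ Set.Icc 0 M := by
  rw [ae_iff]
  exact hconc

lemma integrable_poly [IsFiniteMeasure m] (hM : 0 ≤ M) (hconc : m (Set.Icc 0 M)ᶜ = 0)
    (P : Polynomial ℝ) : Integrable (fun x => P.eval x) m := by
  obtain ⟨C, hC⟩ := (isCompact_Icc (a := (0:ℝ)) (b := M)).exists_bound_of_continuousOn
    (P.continuous.continuousOn)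
  refine Integrable.mono' (integrable_const C) P.continuous.aestronglyMeasurable ?_
  filter_upwards [ae_mem_Icc m M hconc] with x hx
  exact hC x hx

lemma integral_pow_eq_of_lintegral (hM : 0 ≤ M) (hconc : m (Set.Icc 0 M)ᶜ = 0) (n : ℕ) :
    ∫ x, x ^ n ∂m = (∫⁻ x, ENNReal.ofReal (x ^ n) ∂m).toReal := by
  refine integral_eq_lintegral_of_nonneg_ae ?_ ?_
  · filter_upwards [ae_mem_Icc m M hconc] with x hx
    exact pow_nonneg hx.1 n
  · exact (continuous_pow n).aestronglyMeasurable

end moments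

section suppeq

lemma integral_poly_eq (m1 m2 : Measure ℝ) [IsFiniteMeasure m1] [IsFiniteMeasure m2]
    (M : ℝ) (hM : 0 ≤ M) (hc1 : m1 (Set.Icc 0 M)ᶜ = 0) (hc2 : m2 (Set.Icc 0 M)ᶜ = 0)
    (hmom : ∀ n : ℕ, ∫⁻ x, ENNReal.ofReal (x ^ n) ∂m1 = ∫⁻ x, ENNReal.ofReal (x ^ n) ∂m2)
    (P : Polynomial ℝ) : ∫ x, P.eval x ∂m1 = ∫ x, P.eval x ∂m2 := by
  have key : ∀ n : ℕ, ∫ x, x ^ n ∂m1 = ∫ x, x ^ n ∂m2 := by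
    intro n
    rw [integral_pow_eq_of_lintegral m1 M hM hc1 n, integral_pow_eq_of_lintegral m2 M hM hc2 n,
      hmom n]
  have hint : ∀ (m : Measure ℝ) [IsFiniteMeasure m], m (Set.Icc 0 M)ᶜ = 0 →
      ∀ k : ℕ, Integrable (fun x => x ^ k) m := by
    intro m _ hc k
    have h := integrable_poly m M hM hc (Polynomial.X ^ k)
    simp only [Polynomial.eval_pow, Polynomial.eval_X] at h
    exact h
  simp only [Polynomial.eval_eq_sum_range (R := ℝ)]
  rw [integral_finset_sum _ (fun k _ => ((hint m1 hc1 k).const_mul _)),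
    integral_finset_sum _ (fun k _ => ((hint m2 hc2 k).const_mul _))]
  refine Finset.sum_congr rfl (fun k _ => ?_)
  rw [integral_const_mul, integral_const_mul, key k]

end suppeq

lemma finite_of_moment0 (m : Measure ℝ) (c : ℝ)
    (h : ∫⁻ x, ENNReal.ofReal (x ^ 0) ∂m = ENNReal.ofReal c) : IsFiniteMeasure m := by
  constructor
  have : ∫⁻ x, ENNReal.ofReal ((x:ℝ) ^ 0) ∂m = m Set.univ := by
    simp
  rw [this] at h
  rw [h]
  exact ENNReal.ofReal_lt_top

lemma lintegral_pow_le (m : Measure ℝ) (M : ℝ) (hM : 0 ≤ M)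
    (hconc : m (Set.Icc 0 M)ᶜ = 0) (n : ℕ) :
    ∫⁻ x, ENNReal.ofReal (x ^ n) ∂m ≤ ENNReal.ofReal (M ^ n) * m Set.univ := by
  calc ∫⁻ x, ENNReal.ofReal (x ^ n) ∂m ≤ ∫⁻ _, ENNReal.ofReal (M ^ n) ∂m := by
        refine lintegral_mono_ae ?_
        filter_upwards [ae_mem_Icc m M hconc] with t ht
        exact ENNReal.ofReal_le_ofReal (pow_le_pow_left₀ ht.1 ht.2 n)
    _ = ENNReal.ofReal (M ^ n) * m Set.univ := lintegral_const _

lemma msupport_sub_Icc (m : Measure ℝ) [IsFiniteMeasure m] (b : ℕ → ℝ)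
    (hb : ∀ n, ∫⁻ x, ENNReal.ofReal (x ^ n) ∂m = ENNReal.ofReal (b n))
    (hb0 : m (Set.Iio 0) = 0) (R C : ℝ) (hR : 0 < R) (hC : 0 ≤ C)
    (hbound : ∀ n, b n ≤ C * R ^ n) :
    msupport m ⊆ Set.Icc 0 R := by
  intro x0 hx0
  constructor
  · by_contra hneg
    push_neg at hneg
    have := hx0 (Set.Iio 0) isOpen_Iio hneg
    rw [hb0] at this
    exact lt_irrefl 0 this
  · by_contra hgt
    push_neg at hgt
    obtain ⟨x1, hx1R, hx1x0⟩ : ∃ x1 : ℝ, R < x1 ∧ x1 < x0 := ⟨(R + x0)/2, by constructor <;> linarith⟩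
    have hx1pos : 0 < x1 := lt_trans hR hx1R
    have hcpos : 0 < m (Set.Ioi x1) := hx0 (Set.Ioi x1) isOpen_Ioi hx1x0
    obtain ⟨c, hcdef⟩ : ∃ c : ℝ, c = (m (Set.Ioi x1)).toReal := ⟨_, rfl⟩
    have hcr : 0 < c := hcdef ▸ ENNReal.toReal_pos hcpos.ne' (measure_ne_top _ _)
    have hkey : ∀ n : ℕ, x1 ^ n * c ≤ C * R ^ n := by
      intro n
      have h1 : ENNReal.ofReal (x1 ^ n) * m (Set.Ioi x1) ≤ ENNReal.ofReal (b n) := by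
        calc ENNReal.ofReal (x1 ^ n) * m (Set.Ioi x1)
            = ∫⁻ _ in Set.Ioi x1, ENNReal.ofReal (x1 ^ n) ∂m := (setLIntegral_const _ _).symm
          _ ≤ ∫⁻ x in Set.Ioi x1, ENNReal.ofReal (x ^ n) ∂m := by
              refine setLIntegral_mono ((measurable_id.pow_const n).ennreal_ofReal) ?_
              intro x hx
              exact ENNReal.ofReal_le_ofReal (pow_le_pow_left₀ hx1pos.le (le_of_lt hx) n)
          _ ≤ ∫⁻ x, ENNReal.ofReal (x ^ n) ∂m := setLIntegral_le_lintegral _ _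
          _ = ENNReal.ofReal (b n) := hb n
      have h2 : (ENNReal.ofReal (x1 ^ n) * m (Set.Ioi x1)).toReal ≤ (ENNReal.ofReal (b n)).toReal :=
        ENNReal.toReal_mono ENNReal.ofReal_ne_top h1
      rw [ENNReal.toReal_mul, ENNReal.toReal_ofReal (by positivity)] at h2
      calc x1 ^ n * c ≤ (ENNReal.ofReal (b n)).toReal := by rw [hcdef]; exact h2
        _ = max (b n) 0 := ENNReal.toReal_ofReal'
        _ ≤ C * R ^ n := max_le (hbound n) (by positivity)
    obtain ⟨n, hn⟩ := pow_unbounded_of_one_lt ((C + 1)/c) ((one_lt_div hR).2 hx1R)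
    have hRn : (0:ℝ) < R ^ n := by positivity
    have h3 : (C + 1)/c * R ^ n < x1 ^ n := by
      have := mul_lt_mul_of_pos_right hn hRn
      calc (C + 1)/c * R ^ n < (x1/R) ^ n * R ^ n := this
        _ = x1 ^ n := by rw [div_pow]; field_simp
    have h4 : (C + 1) * R ^ n < x1 ^ n * c := by
      rw [div_mul_eq_mul_div, div_lt_iff₀ hcr] at h3
      linarith
    have h5 := hkey n
    nlinarith

set_option maxHeartbeats 1000000 in
lemma msupport_subset_of_moments (m1 m2 : Measure ℝ) [IsFiniteMeasure m1] [IsFiniteMeasure m2]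
    (M : ℝ) (hM : 0 ≤ M) (hc1 : m1 (Set.Icc 0 M)ᶜ = 0) (hc2 : m2 (Set.Icc 0 M)ᶜ = 0)
    (hmom : ∀ n : ℕ, ∫⁻ x, ENNReal.ofReal (x ^ n) ∂m1 = ∫⁻ x, ENNReal.ofReal (x ^ n) ∂m2) :
    msupport m2 ⊆ msupport m1 := by
  intro x hx
  by_contra hxn
  simp only [msupport, Set.mem_setOf_eq, not_forall] at hxn
  obtain ⟨U, hUopen, hxU, hU0'⟩ := hxn
  have hU0 : m1 U = 0 := by simpa using hU0'
  obtain ⟨ε, hε, hball⟩ := Metric.isOpen_iff.1 hUopen x hxU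
  rw [Real.ball_eq_Ioo] at hball
  have hIoo0 : m1 (Set.Ioo (x - ε) (x + ε)) = 0 := measure_mono_null hball hU0
  obtain ⟨B, hB⟩ : ∃ B : ℝ, B = |x| + ε + M + 1 := ⟨_, rfl⟩
  obtain ⟨C0, hC0⟩ : ∃ C0 : ℝ, C0 = B ^ 2 := ⟨_, rfl⟩
  have hBpos : 0 < B := by rw [hB]; positivity
  have hC0pos : 0 < C0 := by rw [hC0]; positivity
  obtain ⟨δ, hδ⟩ : ∃ δ : ℝ, δ = 1 / (2 * C0) := ⟨_, rfl⟩
  have hδpos : 0 < δ := by rw [hδ]; positivity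
  have hδC0 : δ * C0 = 1 / 2 := by rw [hδ]; field_simp
  obtain ⟨g, hgdef⟩ : ∃ g : ℝ → ℝ, g = fun t => 1 + δ * ((x + ε/2 - t) * (t - (x - ε/2))) :=
    ⟨_, rfl⟩
  have hgval : ∀ t, g t = 1 + δ * ((x + ε/2 - t) * (t - (x - ε/2))) := fun t => by rw [hgdef]
  obtain ⟨r, hr⟩ : ∃ r : ℝ, r = 1 - δ * (ε^2/2) := ⟨_, rfl⟩
  obtain ⟨ρ, hρ⟩ : ∃ ρ : ℝ, ρ = 1 + δ * (ε^2/16) := ⟨_, rfl⟩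
  have habs : ∀ t ∈ Set.Icc (0:ℝ) M, |(x + ε/2 - t) * (t - (x - ε/2))| ≤ C0 := by
    intro t ht
    rw [abs_mul, hC0, sq]
    have h1 : |x + ε/2 - t| ≤ B := by
      rw [abs_le]
      constructor <;> nlinarith [le_abs_self x, neg_abs_le x, ht.1, ht.2, hε.le, hB]
    have h2 : |t - (x - ε/2)| ≤ B := by
      rw [abs_le]
      constructor <;> nlinarith [le_abs_self x, neg_abs_le x, ht.1, ht.2, hε.le, hB]
    exact mul_le_mul h1 h2 (abs_nonneg _) hBpos.le
  have hg_lb : ∀ t ∈ Set.Icc (0:ℝ) M, 1/2 ≤ g t := by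
    intro t ht
    have h1 := habs t ht
    have h2 : -C0 ≤ (x + ε/2 - t) * (t - (x - ε/2)) := by
      have := neg_abs_le ((x + ε/2 - t) * (t - (x - ε/2)))
      linarith
    have h3 : δ * (-C0) ≤ δ * ((x + ε/2 - t) * (t - (x - ε/2))) :=
      mul_le_mul_of_nonneg_left h2 hδpos.le
    rw [hgval t]
    nlinarith [hδC0]
  have hεC0 : ε^2 ≤ C0 := by
    rw [hC0, hB]
    nlinarith [abs_nonneg x, hM, hε.le]
  have hδεsmall : δ * ε^2 ≤ 1/2 := by
    have := mul_le_mul_of_nonneg_left hεC0 hδpos.le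
    linarith [hδC0]
  have hgr : ∀ t, t ∉ Set.Ioo (x - ε) (x + ε) → g t ≤ r := by
    intro t ht
    have hcase : t ≤ x - ε ∨ x + ε ≤ t := by
      by_contra hcon
      push_neg at hcon
      exact ht ⟨hcon.1, hcon.2⟩
    have hprod : (x + ε/2 - t) * (t - (x - ε/2)) ≤ -(ε^2/2) := by
      rcases hcase with h | h <;> nlinarith [hε]
    have h3 : δ * ((x + ε/2 - t) * (t - (x - ε/2))) ≤ δ * (-(ε^2/2)) :=
      mul_le_mul_of_nonneg_left hprod hδpos.le
    rw [hgval t, hr]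
    nlinarith []
  have hgρ : ∀ t ∈ Set.Ioo (x - ε/4) (x + ε/4), ρ ≤ g t := by
    intro t ht
    obtain ⟨ht1, ht2⟩ := ht
    have hprod : ε^2/16 ≤ (x + ε/2 - t) * (t - (x - ε/2)) := by
      nlinarith [hε]
    have h3 : δ * (ε^2/16) ≤ δ * ((x + ε/2 - t) * (t - (x - ε/2))) :=
      mul_le_mul_of_nonneg_left hprod hδpos.le
    rw [hgval t, hρ]
    linarith
  have hr1 : r < 1 := by
    have : 0 < δ * (ε^2/2) := by positivity
    rw [hr]; linarith
  have hr0 : 0 ≤ r := by rw [hr]; linarith [hδεsmall]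
  have hρ1 : 1 ≤ ρ := by
    have : 0 ≤ δ * (ε^2/16) := by positivity
    rw [hρ]; linarith
  set P : Polynomial ℝ := Polynomial.C 1 + Polynomial.C δ *
      ((Polynomial.C (x + ε/2) - Polynomial.X) * (Polynomial.X - Polynomial.C (x - ε/2))) with hP
  have heval : ∀ t : ℝ, P.eval t = g t := by
    intro t
    rw [hgval t]
    simp only [hP, Polynomial.eval_add, Polynomial.eval_mul, Polynomial.eval_sub,
      Polynomial.eval_C, Polynomial.eval_X, Polynomial.eval_one]
  have hevalN : ∀ (N : ℕ) (t : ℝ), (P ^ N).eval t = (g t) ^ N := by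
    intro N t
    rw [Polynomial.eval_pow, heval]
  have hI1 : ∀ N : ℕ, Integrable (fun t => (g t) ^ N) m1 := by
    intro N
    have h := integrable_poly m1 M hM hc1 (P ^ N)
    simpa only [hevalN] using h
  have hI2 : ∀ N : ℕ, Integrable (fun t => (g t) ^ N) m2 := by
    intro N
    have h := integrable_poly m2 M hM hc2 (P ^ N)
    simpa only [hevalN] using h
  obtain ⟨c1, hc1def⟩ : ∃ c1 : ℝ, c1 = (m1 Set.univ).toReal := ⟨_, rfl⟩
  have hc1nn : 0 ≤ c1 := hc1def ▸ ENNReal.toReal_nonneg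
  obtain ⟨c2, hc2def⟩ : ∃ c2 : ℝ, c2 = (m2 (Set.Ioo (x - ε/4) (x + ε/4))).toReal := ⟨_, rfl⟩
  have hc2pos : 0 < c2 := by
    rw [hc2def]
    refine ENNReal.toReal_pos ?_ (measure_ne_top _ _)
    exact (hx (Set.Ioo (x - ε/4) (x + ε/4)) isOpen_Ioo (by constructor <;> linarith)).ne'
  have key : ∀ N : ℕ, ρ ^ N * c2 ≤ r ^ N * c1 := by
    intro N
    have hub : ∫ t, (g t) ^ N ∂m1 ≤ r ^ N * c1 := by
      have hae : ∀ᵐ t ∂m1, (g t) ^ N ≤ r ^ N := by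
        have hIoo : ∀ᵐ t ∂m1, t ∉ Set.Ioo (x - ε) (x + ε) := by
          rw [ae_iff]
          simp only [not_not]; exact hIoo0
        filter_upwards [hIoo, ae_mem_Icc m1 M hc1] with t ht htIcc
        have h0 : 0 ≤ g t := by linarith [hg_lb t htIcc]
        exact pow_le_pow_left₀ h0 (hgr t ht) N
      calc ∫ t, (g t) ^ N ∂m1 ≤ ∫ _, r ^ N ∂m1 :=
            integral_mono_ae (hI1 N) (integrable_const _) hae
        _ = c1 * r ^ N := by rw [integral_const, hc1def, smul_eq_mul]; rfl
        _ = r ^ N * c1 := by ring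
    have hlb : ρ ^ N * c2 ≤ ∫ t, (g t) ^ N ∂m2 := by
      have h1 : ρ ^ N * c2 ≤ ∫ t in Set.Ioo (x - ε/4) (x + ε/4), (g t) ^ N ∂m2 := by
        rw [hc2def]
        refine setIntegral_ge_of_const_le_real measurableSet_Ioo (measure_ne_top _ _) ?_
          ((hI2 N).integrableOn)
        intro t ht
        exact pow_le_pow_left₀ (by linarith) (hgρ t ht) N
      have h2 : ∫ t in Set.Ioo (x - ε/4) (x + ε/4), (g t) ^ N ∂m2 ≤ ∫ t, (g t) ^ N ∂m2 := by
        refine setIntegral_le_integral (hI2 N) ?_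
        filter_upwards [ae_mem_Icc m2 M hc2] with t ht
        exact pow_nonneg (by linarith [hg_lb t ht]) N
      linarith
    have heq : ∫ t, (g t) ^ N ∂m2 = ∫ t, (g t) ^ N ∂m1 := by
      have h := integral_poly_eq m1 m2 M hM hc1 hc2 hmom (P ^ N)
      simp only [hevalN] at h
      linarith
    linarith
  obtain ⟨N, hN⟩ := exists_pow_lt_of_lt_one (show (0:ℝ) < c2 / (c1 + 1) by positivity) hr1
  have h1 : r ^ N * c1 < c2 := by
    have h2 : r ^ N * (c1 + 1) < c2 := by
      have h3 := mul_lt_mul_of_pos_right hN (show (0:ℝ) < c1 + 1 by linarith)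
      calc r ^ N * (c1 + 1) < c2 / (c1 + 1) * (c1 + 1) := h3
        _ = c2 := by field_simp
    nlinarith [pow_nonneg hr0 N]
  have h3 : c2 ≤ ρ ^ N * c2 := by
    nlinarith [one_le_pow₀ hρ1 (n := N), hc2pos]
  linarith [key N]

noncomputable def prodMeas (ν : Measure ℝ) : ℕ → Measure ℝ
  | 0 => ν
  | k+1 => Measure.map (fun p : ℝ × ℝ => p.1 * p.2) ((prodMeas ν k).prod ν)


variable (ν : Measure ℝ) (S : Set ℝ)

lemma measurable_mul2 : Measurable (fun p : ℝ × ℝ => p.1 * p.2) :=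
  measurable_fst.mul measurable_snd

lemma meas_ofReal_pow (n : ℕ) : Measurable (fun x : ℝ => ENNReal.ofReal (x ^ n)) :=
  (measurable_id.pow_const n).ennreal_ofReal

lemma prodMeas_finite [IsFiniteMeasure ν] (k : ℕ) : IsFiniteMeasure (prodMeas ν k) := by
  induction k with
  | zero => exact (inferInstance : IsFiniteMeasure ν)
  | succ k ih =>
    constructor
    rw [prodMeas, Measure.map_apply measurable_mul2 MeasurableSet.univ, Set.preimage_univ,
      ← Set.univ_prod_univ, Measure.prod_prod]
    exact ENNReal.mul_lt_top (ih.measure_univ_lt_top) (measure_lt_top _ _)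

lemma prodMeas_neg [IsFiniteMeasure ν] (hb0 : ν (Set.Iio 0) = 0) (k : ℕ) :
    prodMeas ν k (Set.Iio 0) = 0 := by
  induction k with
  | zero => simpa [prodMeas] using hb0
  | succ k ih =>
    haveI := prodMeas_finite ν k
    rw [prodMeas, Measure.map_apply measurable_mul2 measurableSet_Iio]
    have hsub : (fun p : ℝ × ℝ => p.1 * p.2) ⁻¹' (Set.Iio 0) ⊆
        (Set.Iio 0 ×ˢ Set.univ) ∪ (Set.univ ×ˢ Set.Iio 0) := by
      intro p hp
      simp only [Set.mem_preimage, Set.mem_Iio] at hp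
      by_contra hcon
      simp only [Set.mem_union, Set.mem_prod, Set.mem_univ, Set.mem_Iio, and_true, true_and,
        not_or, not_lt] at hcon
      nlinarith [hcon.1, hcon.2]
    refine measure_mono_null hsub ?_
    refine le_antisymm ?_ (zero_le)
    refine (measure_union_le _ _).trans ?_
    rw [Measure.prod_prod, Measure.prod_prod, ih, hb0]
    simp

lemma prodMeas_moment [IsFiniteMeasure ν] (hb0 : ν (Set.Iio 0) = 0) (k : ℕ) (n : ℕ) :
    ∫⁻ x, ENNReal.ofReal (x ^ n) ∂(prodMeas ν k) =
      (∫⁻ x, ENNReal.ofReal (x ^ n) ∂ν) ^ (k + 1) := by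
  induction k with
  | zero => simp [prodMeas]
  | succ k ih =>
    haveI := prodMeas_finite ν k
    rw [prodMeas, lintegral_map (meas_ofReal_pow n) measurable_mul2]
    have hae : ∀ᵐ p ∂((prodMeas ν k).prod ν),
        ENNReal.ofReal ((p.1 * p.2) ^ n) = ENNReal.ofReal (p.1 ^ n) * ENNReal.ofReal (p.2 ^ n) := by
      have h1 : ((prodMeas ν k).prod ν) ((Set.Iio 0) ×ˢ (Set.univ : Set ℝ)) = 0 := by
        rw [Measure.prod_prod, prodMeas_neg ν hb0 k, zero_mul]
      have h2 : ((prodMeas ν k).prod ν) ((Set.univ : Set ℝ) ×ˢ (Set.Iio 0)) = 0 := by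
        rw [Measure.prod_prod, hb0, mul_zero]
      have hnull : ((prodMeas ν k).prod ν)
          (((Set.Iio 0) ×ˢ (Set.univ : Set ℝ)) ∪ ((Set.univ : Set ℝ) ×ˢ (Set.Iio 0))) = 0 := by
        refine le_antisymm ((measure_union_le _ _).trans ?_) (zero_le)
        rw [h1, h2]; simp
      rw [ae_iff]
      refine measure_mono_null ?_ hnull
      intro p hp
      simp only [Set.mem_setOf_eq] at hp
      by_contra hcon
      simp only [Set.mem_union, Set.mem_prod, Set.mem_univ, Set.mem_Iio, and_true, true_and,
        not_or, not_lt] at hcon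
      exact hp (by rw [mul_pow, ENNReal.ofReal_mul (pow_nonneg hcon.1 n)])
    rw [lintegral_congr_ae hae,
      lintegral_prod_mul (meas_ofReal_pow n).aemeasurable (meas_ofReal_pow n).aemeasurable, ih]
    ring

lemma prodSet_compact (hS : IsCompact S) (k : ℕ) : IsCompact (prodSet S k) := by
  induction k with
  | zero => simpa [prodSet] using hS
  | succ k ih => exact (ih.prod hS).image continuous_mul

lemma prodSet_sub_Icc (R : ℝ) (hR : 0 ≤ R) (hS : S ⊆ Set.Icc 0 R) (k : ℕ) :
    prodSet S k ⊆ Set.Icc 0 (R ^ (k + 1)) := by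
  induction k with
  | zero => simpa [prodSet] using hS
  | succ k ih =>
    rintro y ⟨⟨z, s⟩, ⟨hz, hs⟩, rfl⟩
    obtain ⟨hz0, hzR⟩ := ih hz
    obtain ⟨hs0, hsR⟩ := hS hs
    constructor
    · exact mul_nonneg hz0 hs0
    · rw [pow_succ]
      exact mul_le_mul hzR hsR hs0 (by positivity)

lemma prodMeas_compl_prodSet [IsFiniteMeasure ν] (hS : IsCompact (S : Set ℝ))
    (hconc : ν Sᶜ = 0) (k : ℕ) : prodMeas ν k (prodSet S k)ᶜ = 0 := by
  induction k with
  | zero => simpa [prodMeas, prodSet] using hconc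
  | succ k ih =>
    haveI := prodMeas_finite ν k
    have hKc : IsCompact (prodSet S k) := prodSet_compact S hS k
    have hKc' : IsCompact (prodSet S (k+1)) := prodSet_compact S hS (k+1)
    rw [prodMeas, Measure.map_apply measurable_mul2 hKc'.isClosed.measurableSet.compl]
    have hsub : (fun p : ℝ × ℝ => p.1 * p.2) ⁻¹' (prodSet S (k+1))ᶜ ⊆
        ((prodSet S k)ᶜ ×ˢ Set.univ) ∪ (Set.univ ×ˢ Sᶜ) := by
      intro p hp
      simp only [Set.mem_preimage, Set.mem_compl_iff] at hp
      by_contra hcon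
      simp only [Set.mem_union, Set.mem_prod, Set.mem_univ, Set.mem_compl_iff, and_true, true_and,
        not_or, not_not] at hcon
      exact hp ⟨p, ⟨hcon.1, hcon.2⟩, rfl⟩
    refine measure_mono_null hsub ?_
    refine le_antisymm ((measure_union_le _ _).trans ?_) (zero_le)
    rw [Measure.prod_prod, Measure.prod_prod, ih, hconc]
    simp

lemma prodSet_sub_msupport [IsFiniteMeasure ν] (k : ℕ) :
    ∀ y ∈ prodSet (msupport ν) k, y ∈ msupport (prodMeas ν k) := by
  induction k with
  | zero => simp [prodSet, prodMeas]
  | succ k ih =>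
    haveI := prodMeas_finite ν k
    rintro y ⟨⟨z, s⟩, ⟨hz, hs⟩, rfl⟩
    intro U hU hyU
    rw [prodMeas, Measure.map_apply measurable_mul2 hU.measurableSet]
    have hpre : IsOpen ((fun p : ℝ × ℝ => p.1 * p.2) ⁻¹' U) := hU.preimage continuous_mul
    have hmem : (z, s) ∈ (fun p : ℝ × ℝ => p.1 * p.2) ⁻¹' U := hyU
    obtain ⟨u, v, hu, hv, hzu, hsv, huv⟩ := isOpen_prod_iff.1 hpre z s hmem
    have hpos : (0:ℝ≥0∞) < (prodMeas ν k) u * ν v :=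
      ENNReal.mul_pos (ih z hz u hu hzu).ne' (hs v hv hsv).ne'
    have heq : ((prodMeas ν k).prod ν) (u ×ˢ v) = (prodMeas ν k) u * ν v := Measure.prod_prod _ _
    exact lt_of_lt_of_le (heq ▸ hpos) (measure_mono huv)

variable (S : Set ℝ)

lemma pow_mul_pow_mem_prodSet {u v : ℝ} (hu : u ∈ S) (hv : v ∈ S) (k : ℕ) :
    ∀ j ≤ k + 1, u ^ (k + 1 - j) * v ^ j ∈ prodSet S k := by
  induction k with
  | zero =>
    intro j hj
    interval_cases j
    · simpa [prodSet] using hu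
    · simpa [prodSet] using hv
  | succ k ih =>
    intro j hj
    rcases Nat.lt_or_ge j (k + 2) with h | h
    · have hj' : j ≤ k + 1 := by omega
      have hz := ih j hj'
      refine ⟨(u ^ (k + 1 - j) * v ^ j, u), ⟨hz, hu⟩, ?_⟩
      have : k + 2 - j = (k + 1 - j) + 1 := by omega
      rw [this, pow_succ]
      ring
    · have hj2 : j = k + 2 := by omega
      subst hj2
      have hz := ih (k + 1) (le_refl _)
      refine ⟨(u ^ 0 * v ^ (k + 1), v), ⟨by simpa using hz, hv⟩, ?_⟩
      simp [pow_succ]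
  
lemma mem_prodSet_list (k : ℕ) : ∀ y ∈ prodSet S k,
    ∃ l : List ℝ, l.length = k + 1 ∧ (∀ x ∈ l, x ∈ S) ∧ l.prod = y := by
  induction k with
  | zero =>
    intro y hy
    exact ⟨[y], by simp, by simpa [prodSet] using hy, by simp⟩
  | succ k ih =>
    rintro y ⟨⟨z, s⟩, ⟨hz, hs⟩, rfl⟩
    obtain ⟨l, hlen, hmem, hprod⟩ := ih z hz
    refine ⟨s :: l, by simp [hlen], ?_, by simp [hprod]; ring⟩
    intro x hx
    rcases List.mem_cons.1 hx with h | h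
    · exact h ▸ hs
    · exact hmem x h

lemma list_exists_max : ∀ (l : List ℝ), l ≠ [] → ∃ v ∈ l, ∀ y ∈ l, y ≤ v := by
  intro l hl
  induction l with
  | nil => exact absurd rfl hl
  | cons a t ih =>
    rcases eq_or_ne t [] with rfl | ht
    · exact ⟨a, by simp, by simp⟩
    · obtain ⟨v, hv, hvmax⟩ := ih ht
      rcases le_total a v with h | h
      · exact ⟨v, List.mem_cons_of_mem _ hv, by
          intro y hy
          rcases List.mem_cons.1 hy with rfl | hy'
          · exact h
          · exact hvmax y hy'⟩
      · exact ⟨a, List.mem_cons_self, by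
          intro y hy
          rcases List.mem_cons.1 hy with rfl | hy'
          · exact le_refl _
          · exact (hvmax y hy').trans h⟩

lemma list_prod_nonneg : ∀ (l : List ℝ), (∀ y ∈ l, 0 ≤ y) → 0 ≤ l.prod := by
  intro l
  induction l with
  | nil => simp
  | cons a t ih =>
    intro h
    simp only [List.prod_cons]
    exact mul_nonneg (h a (by simp)) (ih (fun y hy => h y (List.mem_cons_of_mem _ hy)))

lemma list_prod_le_pow : ∀ (l : List ℝ) (v : ℝ), (∀ y ∈ l, 0 ≤ y) → (∀ y ∈ l, y ≤ v) →
    l.prod ≤ v ^ l.length := by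
  intro l
  induction l with
  | nil => simp
  | cons a t ih =>
    intro v h0 hv
    simp only [List.prod_cons, List.length_cons, pow_succ]
    have ht0 : ∀ y ∈ t, 0 ≤ y := fun y hy => h0 y (List.mem_cons_of_mem _ hy)
    have htv : ∀ y ∈ t, y ≤ v := fun y hy => hv y (List.mem_cons_of_mem _ hy)
    have h1 : t.prod ≤ v ^ t.length := ih v ht0 htv
    have h2 : (0:ℝ) ≤ t.prod := list_prod_nonneg t ht0
    have ha := h0 a (by simp)
    have hav := hv a (by simp)
    calc a * t.prod ≤ v * (v ^ t.length) := mul_le_mul hav h1 h2 (le_trans ha hav)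
      _ = v ^ t.length * v := by ring

lemma list_pow_le_prod : ∀ (l : List ℝ) (p : ℝ), 0 ≤ p → (∀ y ∈ l, p ≤ y) →
    p ^ l.length ≤ l.prod := by
  intro l
  induction l with
  | nil => simp
  | cons a t ih =>
    intro p hp h
    simp only [List.prod_cons, List.length_cons, pow_succ]
    have h1 : p ^ t.length ≤ t.prod := ih p hp (fun y hy => h y (List.mem_cons_of_mem _ hy))
    calc p ^ t.length * p ≤ t.prod * a :=
      mul_le_mul h1 (h a (by simp)) hp (le_trans (by positivity) h1)
      _ = a * t.prod := by ring

lemma list_prod_le_mem_mul_pow : ∀ (l : List ℝ) (x v : ℝ), x ∈ l → (∀ y ∈ l, 0 ≤ y) →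
    (∀ y ∈ l, y ≤ v) → l.prod ≤ x * v ^ (l.length - 1) := by
  intro l
  induction l with
  | nil => intro x v hx; exact absurd hx (by simp)
  | cons a t ih =>
    intro x v hx h0 hv
    have ht0 : ∀ y ∈ t, 0 ≤ y := fun y hy => h0 y (List.mem_cons_of_mem _ hy)
    have htv : ∀ y ∈ t, y ≤ v := fun y hy => hv y (List.mem_cons_of_mem _ hy)
    simp only [List.prod_cons, List.length_cons, Nat.add_sub_cancel]
    rcases List.mem_cons.1 hx with rfl | hxt
    · exact mul_le_mul_of_nonneg_left (list_prod_le_pow t v ht0 htv) (h0 x (by simp))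
    · have hlen : t.length ≠ 0 := by
        intro hc
        rw [List.length_eq_zero_iff] at hc
        subst hc
        simp at hxt
      obtain ⟨m, hm⟩ : ∃ m, t.length = m + 1 := ⟨t.length - 1, by omega⟩
      have h1 : t.prod ≤ x * v ^ (t.length - 1) := ih x v hxt ht0 htv
      have hv0 : 0 ≤ v := le_trans (h0 a (by simp)) (hv a (by simp))
      have hx0 : 0 ≤ x := h0 x hx
      calc a * t.prod ≤ v * (x * v ^ (t.length - 1)) := by
            refine mul_le_mul (hv a (by simp)) h1 (list_prod_nonneg t ht0) hv0
        _ = x * (v ^ (t.length - 1) * v) := by ring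
        _ = x * v ^ t.length := by rw [hm]; simp [pow_succ]

lemma list_mem_mul_pow_le_prod : ∀ (l : List ℝ) (x p : ℝ), x ∈ l → 0 ≤ p →
    (∀ y ∈ l, p ≤ y) → x * p ^ (l.length - 1) ≤ l.prod := by
  intro l
  induction l with
  | nil => intro x p hx; exact absurd hx (by simp)
  | cons a t ih =>
    intro x p hx hp h
    have htp : ∀ y ∈ t, p ≤ y := fun y hy => h y (List.mem_cons_of_mem _ hy)
    have ht0 : (0:ℝ) ≤ t.prod := le_trans (by positivity) (list_pow_le_prod t p hp htp)
    simp only [List.prod_cons, List.length_cons, Nat.add_sub_cancel]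
    rcases List.mem_cons.1 hx with rfl | hxt
    · exact mul_le_mul_of_nonneg_left (list_pow_le_prod t p hp htp)
        (le_trans hp (h x (by simp)))
    · have hlen : t.length ≠ 0 := by
        intro hc
        rw [List.length_eq_zero_iff] at hc
        subst hc
        simp at hxt
      obtain ⟨m, hm⟩ : ∃ m, t.length = m + 1 := ⟨t.length - 1, by omega⟩
      have h1 : x * p ^ (t.length - 1) ≤ t.prod := ih x p hxt hp htp
      calc x * p ^ t.length = p * (x * p ^ (t.length - 1)) := by rw [hm]; simp [pow_succ]; ring
        _ ≤ p * t.prod := mul_le_mul_of_nonneg_left h1 hp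
        _ ≤ a * t.prod := mul_le_mul_of_nonneg_right (h a (by simp)) ht0

lemma core_eq (θ1 θ2 θ3 p : ℝ) (h1 : 0 < θ1) (h12 : θ1 < θ2) (h23 : θ2 < θ3)
    (hcond : θ1 * θ3 < θ2 ^ 2)
    (T : Set ℝ) (hhole : ∀ y ∈ T, y ≤ θ1 ∨ θ2 ≤ y) (hub : ∀ y ∈ T, y ≤ θ3)
    (S : Set ℝ) (hSnn : ∀ x ∈ S, 0 ≤ x)
    (κ : ℕ) (hκ : 1 ≤ κ)
    (hT : ∀ u ∈ S, ∀ v ∈ S, ∀ j ≤ κ, u ^ (κ - j) * v ^ j ∈ T)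
    (l : List ℝ) (hlen : l.length = κ) (hmeml : ∀ x ∈ l, x ∈ S) (hprodl : l.prod = θ2)
    (hp : 0 < p) (hpκ : p ^ κ = θ2) : p ∈ S := by
  have hθ2 : (0:ℝ) < θ2 := by linarith
  have hlne : l ≠ [] := by
    intro h
    rw [h] at hlen
    simp at hlen
    omega
  have hposl : ∀ x ∈ l, 0 < x := by
    intro x hx
    rcases (hSnn x (hmeml x hx)).lt_or_eq with h | h
    · exact h
    · exfalso
      have : l.prod = 0 := List.prod_eq_zero (by rw [← h] at hx; exact hx)
      rw [hprodl] at this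
      linarith
  obtain ⟨v, hvl, hvmax⟩ := list_exists_max l hlne
  have hv0 : 0 < v := hposl v hvl
  have hvS : v ∈ S := hmeml v hvl
  have hl0 : ∀ y ∈ l, (0:ℝ) ≤ y := fun y hy => (hposl y hy).le
  have hvκ : θ2 ≤ v ^ κ := by
    have := list_prod_le_pow l v hl0 hvmax
    rw [hprodl, hlen] at this
    exact this
  have hvκθ3 : v ^ κ ≤ θ3 := by
    have hmem := hT v hvS v hvS κ (le_refl _)
    simp only [Nat.sub_self, pow_zero, one_mul] at hmem
    exact hub _ hmem
  have hall : ∀ x ∈ l, p ≤ x := by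
    intro x hxl
    by_contra hxp
    push_neg at hxp
    have hx0 : 0 < x := hposl x hxl
    have hxS : x ∈ S := hmeml x hxl
    have hwT : ∀ j ≤ κ, x ^ (κ - j) * v ^ j ∈ T := hT x hxS v hvS
    have hw0lt : x ^ κ < θ2 := by
      calc x ^ κ < p ^ κ := pow_lt_pow_left₀ hxp hx0.le (by omega)
        _ = θ2 := hpκ
    have hw0le : x ^ κ ≤ θ1 := by
      have hmem := hwT 0 (by omega)
      simp only [Nat.sub_zero, pow_zero, mul_one] at hmem
      rcases hhole _ hmem with h | h
      · exact h
      · linarith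
    have hex : ∃ j, ¬ (x ^ (κ - j) * v ^ j ≤ θ1) := by
      refine ⟨κ, ?_⟩
      simp only [Nat.sub_self, pow_zero, one_mul, not_le]
      linarith
    set j0 := Nat.find hex with hj0def
    have hj0 : ¬ (x ^ (κ - j0) * v ^ j0 ≤ θ1) := Nat.find_spec hex
    have hmin : ∀ m, m < j0 → x ^ (κ - m) * v ^ m ≤ θ1 := by
      intro m hm
      have := Nat.find_min hex hm
      simpa using this
    have hj0pos : 0 < j0 := by
      rcases Nat.eq_zero_or_pos j0 with h | h
      · exfalso
        apply hj0
        rw [h]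
        simpa using hw0le
      · exact h
    have hj0κ : j0 ≤ κ := by
      by_contra hgt
      push_neg at hgt
      have := hmin κ hgt
      simp only [Nat.sub_self, pow_zero, one_mul] at this
      linarith
    have hw1 : θ2 ≤ x ^ (κ - j0) * v ^ j0 := by
      rcases hhole _ (hwT j0 hj0κ) with h | h
      · exact absurd h hj0
      · exact h
    have hw2 : x ^ (κ - (j0 - 1)) * v ^ (j0 - 1) ≤ θ1 := hmin (j0 - 1) (by omega)
    have e1 : κ - (j0 - 1) = (κ - j0) + 1 := by omega
    have e3 : v ^ j0 = v ^ (j0 - 1) * v := by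
      conv_lhs => rw [show j0 = (j0 - 1) + 1 by omega]
      rw [pow_succ]
    have hid : (x ^ (κ - j0) * v ^ j0) * x = (x ^ (κ - (j0 - 1)) * v ^ (j0 - 1)) * v := by
      rw [e1, pow_succ, e3]
      ring
    have hA : θ2 * x ≤ θ1 * v := by
      calc θ2 * x ≤ (x ^ (κ - j0) * v ^ j0) * x := mul_le_mul_of_nonneg_right hw1 hx0.le
        _ = (x ^ (κ - (j0 - 1)) * v ^ (j0 - 1)) * v := hid
        _ ≤ θ1 * v := mul_le_mul_of_nonneg_right hw2 hv0.le
    have hB : θ2 * v ≤ θ3 * x := by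
      have hpl : θ2 ≤ x * v ^ (κ - 1) := by
        have := list_prod_le_mem_mul_pow l x v hxl hl0 hvmax
        rw [hprodl, hlen] at this
        exact this
      have e4 : v ^ (κ - 1) * v = v ^ κ := by
        conv_rhs => rw [show κ = (κ - 1) + 1 by omega]
        rw [pow_succ]
      calc θ2 * v ≤ (x * v ^ (κ - 1)) * v := mul_le_mul_of_nonneg_right hpl hv0.le
        _ = x * (v ^ (κ - 1) * v) := by ring
        _ = x * v ^ κ := by rw [e4]
        _ ≤ x * θ3 := mul_le_mul_of_nonneg_left hvκθ3 hx0.le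
        _ = θ3 * x := by ring
    have hAB : (θ2 * x) * (θ2 * v) ≤ (θ1 * v) * (θ3 * x) :=
      mul_le_mul hA hB (by positivity) (by positivity)
    have hfac : (0:ℝ) < (θ2 ^ 2 - θ1 * θ3) * (x * v) :=
      mul_pos (by nlinarith) (mul_pos hx0 hv0)
    nlinarith [hAB, hfac]
  obtain ⟨x, hxl⟩ : ∃ x, x ∈ l := by
    cases l with
    | nil => exact absurd rfl hlne
    | cons a t => exact ⟨a, by simp⟩
  have hxp : p ≤ x := hall x hxl
  have hxle : x ≤ p := by
    have h1 : x * p ^ (l.length - 1) ≤ l.prod := list_mem_mul_pow_le_prod l x p hxl hp.le hall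
    rw [hprodl, hlen] at h1
    have h2 : p ^ κ = p * p ^ (κ - 1) := by
      conv_lhs => rw [show κ = (κ - 1) + 1 by omega]
      rw [pow_succ]
      ring
    rw [← hpκ, h2] at h1
    have hpow : (0:ℝ) < p ^ (κ - 1) := by positivity
    exact le_of_mul_le_mul_right h1 hpow
  have : x = p := le_antisymm hxle hxp
  rw [← this]
  exact hmeml x hxl

theorem stmt16 (a : ℕ → ℝ) (μ : Measure ℝ)
    (hμ : IsRepMeas a μ)
    (θ1 θ2 θ3 : ℝ) (h1 : 0 < θ1) (h12 : θ1 < θ2) (h23 : θ2 < θ3)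
    (hθ3 : IsLUB (msupport μ) θ3)
    (hhole : μ (Set.Ioo θ1 θ2) = 0)
    (J : Set ℕ)
    (hJ : J = {κ : ℕ | 2 ≤ κ ∧ IsStieltjes (fun n => a n ^ (1 / (κ : ℝ)))})
    (hJne : J.Nonempty)
    (ν : ℕ → Measure ℝ)
    (hν : ∀ κ ∈ J, IsRepMeas (fun n => a n ^ (1 / (κ : ℝ))) (ν κ))
    (hιss : (1 + ⌊Real.log (θ3 / θ2) / Real.log (θ2 / θ1)⌋ : ℤ) = 1) :
    (θ2 ∈ msupport μ ↔ ∃ κ ∈ J, θ2 ^ (1 / (κ : ℝ)) ∈ msupport (ν κ)) ∧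
    (θ2 ∈ msupport μ ↔ ∀ κ ∈ J, θ2 ^ (1 / (κ : ℝ)) ∈ msupport (ν κ)) := by
  obtain ⟨ha_nn, hμneg, hμmom⟩ := hμ
  haveI : IsFiniteMeasure μ := finite_of_moment0 μ (a 0) (hμmom 0)
  have hθ2pos : (0:ℝ) < θ2 := lt_trans h1 h12
  have hθ3pos : (0:ℝ) < θ3 := lt_trans hθ2pos h23
  have hUB : ∀ y ∈ msupport μ, y ≤ θ3 := fun y hy => hθ3.1 hy
  have hμconc : μ (Set.Icc 0 θ3)ᶜ = 0 := by
    have hsub : (Set.Icc 0 θ3)ᶜ ⊆ Set.Iio 0 ∪ (msupport μ)ᶜ := by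
      intro x hx
      simp only [Set.mem_compl_iff, Set.mem_Icc, not_and, not_le] at hx
      rcases lt_or_ge x 0 with h | h
      · exact Or.inl h
      · refine Or.inr ?_
        intro hmem
        exact absurd (hUB x hmem) (not_le.2 (hx h))
    refine measure_mono_null hsub ?_
    refine le_antisymm ((measure_union_le _ _).trans ?_) (zero_le)
    rw [hμneg, measure_compl_msupport μ]
    simp
  have haUB : ∀ n, a n ≤ a 0 * θ3 ^ n := by
    intro n
    have h := lintegral_pow_le μ θ3 hθ3pos.le hμconc n
    rw [hμmom n] at h
    have hmu : μ Set.univ = ENNReal.ofReal (a 0) := by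
      have := hμmom 0
      simpa using this
    rw [hmu, ← ENNReal.ofReal_mul (by positivity)] at h
    have := (ENNReal.ofReal_le_ofReal_iff (mul_nonneg (by positivity) (ha_nn 0))).1 h
    linarith
  have hholeS : ∀ y ∈ msupport μ, y ≤ θ1 ∨ θ2 ≤ y := by
    intro y hy
    by_contra hcon
    push_neg at hcon
    have := hy (Set.Ioo θ1 θ2) isOpen_Ioo ⟨hcon.1, hcon.2⟩
    rw [hhole] at this
    exact lt_irrefl 0 this
  have hcond : θ1 * θ3 < θ2 ^ 2 := by
    have hfloor : ⌊Real.log (θ3 / θ2) / Real.log (θ2 / θ1)⌋ = 0 := by omega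
    rw [Int.floor_eq_zero_iff] at hfloor
    have hL1 : 0 < Real.log (θ2 / θ1) := Real.log_pos ((one_lt_div h1).2 h12)
    have hlt1 : Real.log (θ3 / θ2) / Real.log (θ2 / θ1) < 1 := hfloor.2
    have hloglt : Real.log (θ3 / θ2) < Real.log (θ2 / θ1) := by
      rw [div_lt_one hL1] at hlt1
      exact hlt1
    have hdiv : θ3 / θ2 < θ2 / θ1 :=
      (Real.log_lt_log_iff (by positivity) (by positivity)).1 hloglt
    rw [div_lt_div_iff₀ hθ2pos h1] at hdiv
    nlinarith
  -- the per-κ equivalence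
  have periff : ∀ κ ∈ J, (θ2 ∈ msupport μ ↔ θ2 ^ (1 / (κ : ℝ)) ∈ msupport (ν κ)) := by
    intro κ hκJ
    have hκ2 : 2 ≤ κ := by
      rw [hJ] at hκJ
      exact hκJ.1
    obtain ⟨hb_nn, hνneg, hνmom⟩ := hν κ hκJ
    have hκR : (0:ℝ) < (κ : ℝ) := by positivity
    have hκne : (κ : ℝ) ≠ 0 := hκR.ne'
    haveI : IsFiniteMeasure (ν κ) := finite_of_moment0 _ _ (hνmom 0)
    have hbκ : ∀ x : ℝ, 0 ≤ x → (x ^ (1 / (κ:ℝ))) ^ κ = x := by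
      intro x hx
      rw [← Real.rpow_natCast (x ^ (1 / (κ:ℝ))) κ, ← Real.rpow_mul hx,
        one_div_mul_cancel hκne, Real.rpow_one]
    obtain ⟨R, hRdef⟩ : ∃ R : ℝ, R = θ3 ^ (1 / (κ:ℝ)) := ⟨_, rfl⟩
    have hRpos : 0 < R := hRdef ▸ Real.rpow_pos_of_pos hθ3pos _
    have hRκ : R ^ κ = θ3 := hRdef ▸ hbκ θ3 hθ3pos.le
    have hpowR : ∀ n : ℕ, ((θ3 ^ n : ℝ)) ^ (1/(κ:ℝ)) = R ^ n := by
      intro n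
      rw [hRdef, ← Real.rpow_natCast θ3 n, ← Real.rpow_mul hθ3pos.le,
        mul_comm ((n:ℝ)) (1/(κ:ℝ)), Real.rpow_mul hθ3pos.le, Real.rpow_natCast]
    have hbbound : ∀ n, a n ^ (1 / (κ:ℝ)) ≤ (a 0 ^ (1 / (κ:ℝ))) * R ^ n := by
      intro n
      calc a n ^ (1 / (κ:ℝ)) ≤ (a 0 * θ3 ^ n) ^ (1 / (κ:ℝ)) :=
            Real.rpow_le_rpow (ha_nn n) (haUB n) (by positivity)
        _ = a 0 ^ (1 / (κ:ℝ)) * ((θ3 ^ n : ℝ)) ^ (1/(κ:ℝ)) :=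
            Real.mul_rpow (ha_nn 0) (by positivity)
        _ = (a 0 ^ (1 / (κ:ℝ))) * R ^ n := by rw [hpowR n]
    have hSsub : msupport (ν κ) ⊆ Set.Icc 0 R :=
      msupport_sub_Icc (ν κ) (fun n => a n ^ (1 / (κ:ℝ))) hνmom hνneg R
        (a 0 ^ (1 / (κ:ℝ))) hRpos (Real.rpow_nonneg (ha_nn 0) _) hbbound
    have hνconc : ν κ (msupport (ν κ))ᶜ = 0 := measure_compl_msupport _
    have hScompact : IsCompact (msupport (ν κ)) :=
      IsCompact.of_isClosed_subset isCompact_Icc (msupport_closed _) hSsub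
    obtain ⟨k, hk⟩ : ∃ k, κ = k + 1 := ⟨κ - 1, by omega⟩
    haveI : IsFiniteMeasure (prodMeas (ν κ) k) := prodMeas_finite (ν κ) k
    have hWmom : ∀ n, ∫⁻ x, ENNReal.ofReal (x ^ n) ∂(prodMeas (ν κ) k) =
        ENNReal.ofReal (a n) := by
      intro n
      rw [prodMeas_moment (ν κ) hνneg k n, hνmom n, ← hk,
        ← ENNReal.ofReal_pow (hb_nn n), hbκ (a n) (ha_nn n)]
    have hWK : prodMeas (ν κ) k (prodSet (msupport (ν κ)) k)ᶜ = 0 :=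
      prodMeas_compl_prodSet (ν κ) (msupport (ν κ)) hScompact hνconc k
    have hKsub : prodSet (msupport (ν κ)) k ⊆ Set.Icc 0 θ3 := by
      have := prodSet_sub_Icc (msupport (ν κ)) R hRpos.le hSsub k
      rw [← hk, hRκ] at this
      exact this
    have hWconc : prodMeas (ν κ) k (Set.Icc 0 θ3)ᶜ = 0 :=
      measure_mono_null (Set.compl_subset_compl.2 hKsub) hWK
    have hmomeq : ∀ n : ℕ, ∫⁻ x, ENNReal.ofReal (x ^ n) ∂μ =
        ∫⁻ x, ENNReal.ofReal (x ^ n) ∂(prodMeas (ν κ) k) := by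
      intro n
      rw [hμmom n, hWmom n]
    have hsupps : msupport μ = msupport (prodMeas (ν κ) k) :=
      le_antisymm
        (msupport_subset_of_moments (prodMeas (ν κ) k) μ θ3 hθ3pos.le hWconc hμconc
          (fun n => (hmomeq n).symm))
        (msupport_subset_of_moments μ (prodMeas (ν κ) k) θ3 hθ3pos.le hμconc hWconc hmomeq)
    have hWsubK : msupport (prodMeas (ν κ) k) ⊆ prodSet (msupport (ν κ)) k := by
      intro x hx
      by_contra hxK
      have hopen : IsOpen (prodSet (msupport (ν κ)) k)ᶜ :=
        (prodSet_compact _ hScompact k).isClosed.isOpen_compl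
      have := hx _ hopen hxK
      rw [hWK] at this
      exact lt_irrefl 0 this
    have hθ2p : (θ2 ^ (1 / (κ:ℝ))) ^ κ = θ2 := hbκ θ2 hθ2pos.le
    have hppos : 0 < θ2 ^ (1 / (κ:ℝ)) := Real.rpow_pos_of_pos hθ2pos _
    constructor
    · -- θ2 ∈ supp μ → p ∈ supp ν κ
      intro hθ2mem
      have hθ2K : θ2 ∈ prodSet (msupport (ν κ)) k := hWsubK (hsupps ▸ hθ2mem)
      obtain ⟨l, hlen, hmeml, hprodl⟩ := mem_prodSet_list _ k θ2 hθ2K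
      rw [← hk] at hlen
      have hT : ∀ u ∈ msupport (ν κ), ∀ v ∈ msupport (ν κ), ∀ j ≤ κ,
          u ^ (κ - j) * v ^ j ∈ msupport μ := by
        intro u hu v hv j hj
        have hmem : u ^ (κ - j) * v ^ j ∈ prodSet (msupport (ν κ)) k := by
          have := pow_mul_pow_mem_prodSet (msupport (ν κ)) hu hv k j (by omega)
          rw [← hk] at this
          exact this
        rw [hsupps]
        exact prodSet_sub_msupport (ν κ) k _ hmem
      exact core_eq θ1 θ2 θ3 (θ2 ^ (1 / (κ:ℝ))) h1 h12 h23 hcond (msupport μ) hholeS hUB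
        (msupport (ν κ)) (fun x hx => (hSsub hx).1) κ (by omega) hT l hlen hmeml hprodl
        hppos hθ2p
    · -- p ∈ supp ν κ → θ2 ∈ supp μ
      intro hpmem
      have hmem : (θ2 ^ (1 / (κ:ℝ))) ^ κ ∈ prodSet (msupport (ν κ)) k := by
        have := pow_mul_pow_mem_prodSet (msupport (ν κ)) hpmem hpmem k 0 (by omega)
        simp only [Nat.sub_zero, pow_zero, mul_one] at this
        rw [← hk] at this
        exact this
      rw [hθ2p] at hmem
      rw [hsupps]
      exact prodSet_sub_msupport (ν κ) k _ hmem
  constructor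
  · constructor
    · intro h
      obtain ⟨κ0, hκ0⟩ := hJne
      exact ⟨κ0, hκ0, (periff κ0 hκ0).1 h⟩
    · rintro ⟨κ0, hκ0, h⟩
      exact (periff κ0 hκ0).2 h
  · constructor
    · intro h κ0 hκ0
      exact (periff κ0 hκ0).1 h
    · intro h
      obtain ⟨κ0, hκ0⟩ := hJne
      exact (periff κ0 hκ0).2 (h κ0 hκ0)
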